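/- Let 2/3 < p ≤ 2 and s_p = 1/p - 1/2. For every s with s_p < s < 1 there is a constant C such that every 2π-periodic Hölder continuous function f of order s satisfies (∑_{ξ∈ℤ} |f̂(ξ)|^p)^{1/p} ≤ C‖f‖_{Λ^s}. -/

import Mathlib

open MeasureTheory Real Function Set AddCircle

noncomputable def fourierCoef (f : ℝ → ℂ) (ξ : ℤ) : ℂ :=
  (1 / (2 * Real.pi)) * ∫ x in (0:ℝ)..(2 * Real.pi), f x * Complex.exp (-(Complex.I * (ξ:ℂ) * (x:ℂ)))

instance fact2pi : Fact (0 < 2 * Real.pi) := ⟨by positivity⟩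

lemma periodic_lift_continuous {f : ℝ → ℂ} (hf : Function.Periodic f (2*Real.pi)) (hc : Continuous f) :
    Continuous hf.lift := continuous_coinduced_dom.mpr hc

lemma fourierCoef_eq (f : ℝ → ℂ) (hf : Function.Periodic f (2*Real.pi)) (ξ : ℤ) :
    fourierCoef f ξ = fourierCoeff (T := 2*Real.pi) hf.lift ξ := by
  have hInt : (∫ x in (0:ℝ)..(2*Real.pi), (fourier (T := 2*Real.pi) (-ξ)) x • hf.lift x)
      = ∫ x in (0:ℝ)..(2*Real.pi), f x * Complex.exp (-(Complex.I * (ξ:ℂ) * (x:ℂ))) := by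
    refine intervalIntegral.integral_congr (fun x _ => ?_)
    simp only [Function.Periodic.lift_coe, fourier_coe_apply, smul_eq_mul]
    rw [mul_comm]
    congr 2
    push_cast
    have h2 : (2*Real.pi : ℂ) ≠ 0 := by
      simp [Real.pi_ne_zero, Complex.ofReal_ne_zero]
    field_simp
  rw [fourierCoeff_eq_intervalIntegral _ ξ 0, zero_add, hInt, fourierCoef, Complex.real_smul]
  push_cast
  ring

lemma parseval_hasSum {f : ℝ → ℂ} (hc : Continuous f) (hf : Function.Periodic f (2*Real.pi)) :
    HasSum (fun ξ : ℤ => ‖fourierCoef f ξ‖^2)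
      ((1/(2*Real.pi)) * ∫ x in (0:ℝ)..(2*Real.pi), ‖f x‖^2) := by
  set F : C(AddCircle (2*Real.pi), ℂ) := ⟨hf.lift, periodic_lift_continuous hf hc⟩ with hF
  set L := ContinuousMap.toLp (E := ℂ) 2 (haarAddCircle) ℂ F with hL
  have hcoef : ∀ ξ : ℤ, fourierCoeff (L : AddCircle (2*Real.pi) → ℂ) ξ = fourierCoef f ξ := by
    intro ξ
    rw [hL, fourierCoeff_toLp, fourierCoef_eq f hf ξ]
    rfl
  have hsum : Summable (fun ξ : ℤ => ‖fourierCoef f ξ‖^2) := by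
    have h1 := (lp.memℓp (fourierBasis.repr L)).summable (p := 2) (by norm_num)
    simp only [ENNReal.toReal_ofNat] at h1
    have : ∀ ξ : ℤ, ‖fourierBasis.repr L ξ‖ ^ (2:ℝ) = ‖fourierCoef f ξ‖^2 := by
      intro ξ
      rw [fourierBasis_repr, hcoef ξ]
      rw [show ((2:ℝ)) = ((2:ℕ):ℝ) by norm_num, Real.rpow_natCast]
    rwa [funext this] at h1
  refine hsum.hasSum_iff.mpr ?_
  have hpar := tsum_sq_fourierCoeff L
  simp only [hcoef] at hpar
  rw [hpar]
  have hae : ∀ᵐ t ∂(haarAddCircle : Measure (AddCircle (2*Real.pi))), ‖(L : AddCircle (2*Real.pi) → ℂ) t‖^2 = ‖F t‖^2 := by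
    filter_upwards [ContinuousMap.coeFn_toLp (p := 2) (haarAddCircle) (𝕜 := ℂ) F] with t ht
    rw [ht]
  rw [integral_congr_ae hae]
  have h2 := AddCircle.intervalIntegral_preimage (2*Real.pi) 0 (fun t => ‖F t‖^2)
  rw [zero_add] at h2
  rw [AddCircle.volume_eq_smul_haarAddCircle, integral_smul_measure] at h2
  have h3 : ∀ x : ℝ, ‖F (x : AddCircle (2*Real.pi))‖^2 = ‖f x‖^2 := by
    intro x; simp [hF, Function.Periodic.lift_coe]
  rw [intervalIntegral.integral_congr (fun x _ => h3 x)] at h2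
  rw [ENNReal.toReal_ofReal (by positivity), smul_eq_mul] at h2
  rw [h2]
  have hpi : (2*Real.pi) ≠ 0 := by positivity
  field_simp

lemma fourierCoef_sub {f g : ℝ → ℂ} (hf : Continuous f) (hg : Continuous g) (ξ : ℤ) :
    fourierCoef (fun x => f x - g x) ξ = fourierCoef f ξ - fourierCoef g ξ := by
  unfold fourierCoef
  rw [← mul_sub, ← intervalIntegral.integral_sub]
  · congr 1
    refine intervalIntegral.integral_congr (fun x _ => ?_)
    ring
  · exact (hf.mul (by continuity)).intervalIntegrable _ _
  · exact (hg.mul (by continuity)).intervalIntegrable _ _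

lemma fourierCoef_shift {f : ℝ → ℂ} (hc : Continuous f) (hf : Function.Periodic f (2*Real.pi))
    (h : ℝ) (ξ : ℤ) :
    fourierCoef (fun x => f (x - h)) ξ
      = Complex.exp (-(Complex.I * (ξ:ℂ) * (h:ℂ))) * fourierCoef f ξ := by
  unfold fourierCoef
  rw [← mul_assoc, mul_comm (Complex.exp _), mul_assoc]
  congr 1
  set g : ℝ → ℂ := fun u => f u * Complex.exp (-(Complex.I * (ξ:ℂ) * ((u+h:ℝ):ℂ))) with hg
  have h1 : (∫ x in (0:ℝ)..(2*Real.pi), f (x - h) * Complex.exp (-(Complex.I * (ξ:ℂ) * (x:ℂ))))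
      = ∫ x in (0:ℝ)..(2*Real.pi), g (x - h) := by
    refine intervalIntegral.integral_congr (fun x _ => ?_)
    rw [hg]
    simp only
    push_cast
    ring_nf
  rw [h1, intervalIntegral.integral_comp_sub_right g h]
  have hper : Function.Periodic g (2*Real.pi) := by
    intro u
    rw [hg]
    simp only
    rw [hf u]
    congr 1
    push_cast
    rw [show -(Complex.I * ξ * (u + 2*Real.pi + h)) = -(Complex.I * ξ * (u + h)) + ((-ξ : ℤ) : ℂ) * (2*Real.pi*Complex.I) by push_cast; ring]
    rw [Complex.exp_add, Complex.exp_int_mul_two_pi_mul_I]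
    ring
  have h2 := hper.intervalIntegral_add_eq (-h) 0
  rw [zero_add] at h2
  rw [show (0:ℝ) - h = -h by ring, show 2*Real.pi - h = -h + 2*Real.pi by ring, h2]
  rw [← intervalIntegral.integral_const_mul]
  refine intervalIntegral.integral_congr (fun x _ => ?_)
  have hexp : Complex.exp (-(Complex.I * (ξ:ℂ) * ((x + h : ℝ):ℂ)))
      = Complex.exp (-(Complex.I * (ξ:ℂ) * (h:ℂ))) * Complex.exp (-(Complex.I * (ξ:ℂ) * (x:ℂ))) := by
    rw [← Complex.exp_add]
    congr 1
    push_cast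
    ring
  rw [hg]
  simp only
  rw [hexp]
  ring

lemma block_l2 {f : ℝ → ℂ} (hc : Continuous f) (hf : Function.Periodic f (2*Real.pi))
    {B s : ℝ} (hB : ∀ x y : ℝ, ‖f (x - y) - f x‖ ≤ B * |y| ^ s)
    (h : ℝ) (G : Finset ℤ)
    (hG : ∀ ξ ∈ G, (3:ℝ) ≤ ‖Complex.exp (-(Complex.I * (ξ:ℂ) * (h:ℂ))) - 1‖^2) :
    ∑ ξ ∈ G, ‖fourierCoef f ξ‖ ^ 2 ≤ (B * |h| ^ s)^2 / 3 := by
  set g : ℝ → ℂ := fun x => f (x - h) - f x with hg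
  have hshift : Continuous (fun x : ℝ => f (x - h)) := hc.comp (continuous_id.sub continuous_const)
  have hgc : Continuous g := hshift.sub hc
  have hgper : Function.Periodic g (2*Real.pi) := by
    intro x
    simp only [hg]
    rw [show x + 2*Real.pi - h = (x - h) + 2*Real.pi by ring, hf (x - h), hf x]
  have hps := parseval_hasSum hgc hgper
  have hval : ∀ ξ : ℤ, ‖fourierCoef g ξ‖^2
      = ‖Complex.exp (-(Complex.I * (ξ:ℂ) * (h:ℂ))) - 1‖^2 * ‖fourierCoef f ξ‖^2 := by
    intro ξ
    have : fourierCoef g ξ = (Complex.exp (-(Complex.I * (ξ:ℂ) * (h:ℂ))) - 1) * fourierCoef f ξ := by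
      rw [hg, fourierCoef_sub hshift hc, fourierCoef_shift hc hf h ξ]
      ring
    rw [this, norm_mul, mul_pow]
  -- the total value is at most (B*|h|^s)^2
  have hle : (1/(2*Real.pi)) * (∫ x in (0:ℝ)..(2*Real.pi), ‖g x‖^2) ≤ (B * |h| ^ s)^2 := by
    have hmono : (∫ x in (0:ℝ)..(2*Real.pi), ‖g x‖^2)
        ≤ ∫ _x in (0:ℝ)..(2*Real.pi), (B * |h| ^ s)^2 := by
      refine intervalIntegral.integral_mono_on (by positivity) ?_ (by simp) ?_
      · exact ((hgc.norm.pow 2)).intervalIntegrable _ _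
      · intro x _
        have h1 : ‖g x‖ ≤ B * |h| ^ s := by
          exact hB x h
        exact pow_le_pow_left₀ (norm_nonneg _) h1 2
    rw [intervalIntegral.integral_const, smul_eq_mul, sub_zero] at hmono
    calc (1/(2*Real.pi)) * (∫ x in (0:ℝ)..(2*Real.pi), ‖g x‖^2)
        ≤ (1/(2*Real.pi)) * (2*Real.pi * (B * |h| ^ s)^2) := by
          refine mul_le_mul_of_nonneg_left hmono (by positivity)
      _ = (B * |h| ^ s)^2 := by field_simp
  have hfin : ∑ ξ ∈ G, ‖Complex.exp (-(Complex.I * (ξ:ℂ) * (h:ℂ))) - 1‖^2 * ‖fourierCoef f ξ‖^2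
      ≤ (B * |h| ^ s)^2 := by
    refine le_trans ?_ hle
    have h2 := sum_le_hasSum G (fun ξ _ => by positivity) hps
    rwa [funext hval] at h2
  have hsum3 : 3 * ∑ ξ ∈ G, ‖fourierCoef f ξ‖^2 ≤ (B * |h| ^ s)^2 := by
    rw [Finset.mul_sum]
    refine le_trans (Finset.sum_le_sum ?_) hfin
    intro ξ hξ
    exact mul_le_mul_of_nonneg_right (hG ξ hξ) (by positivity)
  linarith

lemma exp_norm_sq (t : ℝ) : ‖Complex.exp (-(Complex.I * (t:ℂ))) - 1‖^2 = 2 - 2*Real.cos t := by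
  rw [show -(Complex.I * (t:ℂ)) = (((-t : ℝ)):ℂ) * Complex.I by push_cast; ring,
    Complex.exp_mul_I, ← Complex.ofReal_cos, ← Complex.ofReal_sin]
  rw [show (↑(Real.cos (-t)) + ↑(Real.sin (-t)) * Complex.I - 1 : ℂ)
    = ((Real.cos (-t) - 1 : ℝ):ℂ) + ((Real.sin (-t):ℝ):ℂ) * Complex.I by push_cast; ring]
  rw [Complex.sq_norm, Complex.normSq_add_mul_I, Real.cos_neg, Real.sin_neg]
  nlinarith [Real.sin_sq_add_cos_sq t]

lemma cos_le_neg_half {θ : ℝ} (h1 : 2*π/3 ≤ θ) (h2 : θ ≤ 4*π/3) : Real.cos θ ≤ -(1/2) := by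
  have hc : Real.cos (2*π/3) = -(1/2) := by
    rw [show 2*π/3 = π - π/3 by ring, Real.cos_pi_sub, Real.cos_pi_div_three]
  rcases le_total θ π with hθ | hθ
  · calc Real.cos θ ≤ Real.cos (2*π/3) :=
        Real.cos_le_cos_of_nonneg_of_le_pi (by positivity) hθ h1
    _ = -(1/2) := hc
  · have h3 : Real.cos θ = Real.cos (2*π - θ) := (Real.cos_two_pi_sub θ).symm
    rw [h3]
    calc Real.cos (2*π - θ) ≤ Real.cos (2*π/3) := by
          refine Real.cos_le_cos_of_nonneg_of_le_pi (by positivity) ?_ (by linarith)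
          linarith [Real.pi_pos]
    _ = -(1/2) := hc

lemma exp_lower (n : ℕ) (hn : 1 ≤ n) (ξ : ℤ) (hm1 : 2^(n-1) ≤ ξ.natAbs) (hm2 : ξ.natAbs ≤ 2^n) :
    (3:ℝ) ≤ ‖Complex.exp (-(Complex.I * (ξ:ℂ) * ((4*π/3/2^n : ℝ):ℂ))) - 1‖^2 := by
  set h : ℝ := 4*π/3/2^n with hh
  have h2n : (2:ℝ)^n = 2 * 2^(n-1) := by
    rw [← pow_succ']
    congr 1
    omega
  have h0 : 0 < h := by rw [hh]; positivity
  have hcast : -(Complex.I * (ξ:ℂ) * ((h : ℝ):ℂ)) = -(Complex.I * (((ξ:ℝ) * h : ℝ):ℂ)) := by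
    push_cast; ring
  rw [hcast, exp_norm_sq]
  have hcos : Real.cos ((ξ:ℝ) * h) = Real.cos ((ξ.natAbs:ℝ) * h) := by
    have : ((ξ.natAbs:ℝ)) = |(ξ:ℝ)| := by
      rw [Nat.cast_natAbs]
      norm_num
    rw [this]
    rcases abs_cases ((ξ:ℝ)) with ⟨he, _⟩ | ⟨he, _⟩
    · rw [he]
    · rw [he, show (-(ξ:ℝ)) * h = -((ξ:ℝ)*h) by ring, Real.cos_neg]
  rw [hcos]
  have hb1 : ((2:ℝ)^(n-1)) ≤ (ξ.natAbs:ℝ) := by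
    calc ((2:ℝ)^(n-1)) = ((2^(n-1) : ℕ) : ℝ) := by push_cast; ring
    _ ≤ _ := Nat.cast_le.mpr hm1
  have hb2 : (ξ.natAbs:ℝ) ≤ (2:ℝ)^n := by
    calc (ξ.natAbs:ℝ) ≤ ((2^n : ℕ):ℝ) := Nat.cast_le.mpr hm2
    _ = (2:ℝ)^n := by push_cast; ring
  have hθ1 : 2*π/3 ≤ (ξ.natAbs:ℝ) * h := by
    have := mul_le_mul_of_nonneg_right hb1 h0.le
    refine le_trans (le_of_eq ?_) this
    rw [hh, h2n]
    have : (2:ℝ)^(n-1) ≠ 0 := by positivity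
    field_simp
    ring
  have hθ2 : (ξ.natAbs:ℝ) * h ≤ 4*π/3 := by
    have := mul_le_mul_of_nonneg_right hb2 h0.le
    refine le_trans this (le_of_eq ?_)
    rw [hh]
    have : (2:ℝ)^n ≠ 0 := by positivity
    field_simp
  have := cos_le_neg_half hθ1 hθ2
  linarith

lemma holder_finset (G : Finset ℤ) (a : ℤ → ℝ) (ha : ∀ ξ, 0 ≤ a ξ) {p : ℝ} (hp0 : 0 < p) (hp2 : p ≤ 2) :
    ∑ ξ ∈ G, a ξ ^ p ≤ (∑ ξ ∈ G, a ξ ^ 2) ^ (p/2) * (G.card : ℝ) ^ (1 - p/2) := by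
  have hsq : ∀ ξ : ℤ, a ξ ^ (2:ℝ) = a ξ ^ (2:ℕ) := fun ξ => by
    rw [show ((2:ℝ)) = ((2:ℕ):ℝ) by norm_num, Real.rpow_natCast]
  rcases eq_or_lt_of_le hp2 with rfl | hp2
  · rw [show (2:ℝ)/2 = 1 by norm_num, Real.rpow_one]
    simp only [sub_self, Real.rpow_zero, mul_one]
    exact le_of_eq (Finset.sum_congr rfl fun ξ _ => hsq ξ)
  · have hpq : (2/p).HolderConjugate (2/(2-p)) := by
      rw [Real.holderConjugate_iff]
      constructor
      · rw [lt_div_iff₀ hp0]; linarith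
      · rw [show ((2:ℝ)/p)⁻¹ = p/2 by field_simp, show ((2:ℝ)/(2-p))⁻¹ = (2-p)/2 by field_simp]
        ring
    have h := Real.inner_le_Lp_mul_Lq_of_nonneg G hpq
      (f := fun ξ => a ξ ^ p) (g := fun _ => 1)
      (fun i _ => Real.rpow_nonneg (ha i) p) (fun i _ => zero_le_one)
    simp only [mul_one, Real.one_rpow] at h
    calc ∑ ξ ∈ G, a ξ ^ p
        ≤ (∑ i ∈ G, (a i ^ p) ^ ((2:ℝ)/p)) ^ (1/((2:ℝ)/p)) * (∑ _i ∈ G, (1:ℝ)) ^ (1/((2:ℝ)/(2-p))) := h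
      _ = (∑ ξ ∈ G, a ξ ^ 2) ^ (p/2) * (G.card : ℝ) ^ (1 - p/2) := by
          rw [one_div_div, one_div_div]
          congr 1
          · congr 1
            refine Finset.sum_congr rfl fun ξ _ => ?_
            rw [← Real.rpow_natCast (a ξ) 2, ← Real.rpow_mul (ha ξ),
              show p * (2/p) = ((2:ℕ):ℝ) by push_cast; field_simp]
          · rw [Finset.sum_const, nsmul_eq_mul, mul_one]
            congr 1
            field_simp

lemma fiber_arith {p s B : ℝ} (hp : 0 < p) (hp2 : p ≤ 2) (hB0 : 0 ≤ B) (n : ℕ) :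
    (B * (4*π/3/2^n) ^ s) ^ p * ((2:ℝ)^(n+2)) ^ (1 - p/2)
      ≤ ((4*π/3) ^ (s*p) * 4) * B^p * ((2:ℝ) ^ (1 - p/2 - s*p))^n := by
  set c : ℝ := 4*π/3 with hc
  set t : ℝ := (2:ℝ)^n with ht
  have hc0 : 0 < c := by rw [hc]; positivity
  have ht0 : 0 < t := by rw [ht]; positivity
  have hrn : ((2:ℝ) ^ (1 - p/2 - s*p))^n = t ^ (1 - p/2 - s*p) := by
    rw [← Real.rpow_natCast ((2:ℝ) ^ (1 - p/2 - s*p)) n, ← Real.rpow_mul (by norm_num),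
      mul_comm, Real.rpow_mul (by norm_num), Real.rpow_natCast]
  have hlhs : (B * (c/t) ^ s) ^ p * ((2:ℝ)^(n+2)) ^ (1 - p/2)
      = (B^p * c^(s*p) * t^(1 - p/2 - s*p)) * (4:ℝ)^(1-p/2) := by
    have h1 : ((2:ℝ)^(n+2)) = t * 4 := by rw [ht, pow_add]; norm_num
    rw [h1, Real.mul_rpow ht0.le (by norm_num : (0:ℝ) ≤ 4),
      Real.mul_rpow hB0 (Real.rpow_nonneg (by positivity) s),
      ← Real.rpow_mul (by positivity : (0:ℝ) ≤ c/t),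
      Real.div_rpow hc0.le ht0.le, Real.rpow_sub ht0 (1-p/2) (s*p)]
    have h2 : t ^ (s*p) ≠ 0 := by positivity
    have h3 : t ^ (p/2) ≠ 0 := by positivity
    field_simp
  rw [hrn, hlhs]
  have h4 : (4:ℝ)^((1:ℝ)-p/2) ≤ 4 := by
    calc (4:ℝ)^((1:ℝ)-p/2) ≤ (4:ℝ)^((1:ℝ)) :=
          Real.rpow_le_rpow_of_exponent_le (by norm_num) (by linarith)
    _ = 4 := Real.rpow_one 4
  have hX : (0:ℝ) ≤ B^p * c^(s*p) * t^(1 - p/2 - s*p) := by positivity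
  calc (B^p * c^(s*p) * t^(1 - p/2 - s*p)) * (4:ℝ)^((1:ℝ)-p/2)
      ≤ (B^p * c^(s*p) * t^(1 - p/2 - s*p)) * 4 := mul_le_mul_of_nonneg_left h4 hX
    _ = (c ^ (s*p) * 4) * B^p * t ^ (1 - p/2 - s*p) := by ring


/-- Szász's generalization of Bernstein's theorem. -/
theorem szasz_bernstein (p s : ℝ) (hp0 : 2/3 < p) (hp1 : p ≤ 2)
    (hs0 : 1/p - 1/2 < s) (hs1 : s < 1) :
    ∃ C : ℝ, ∀ f : ℝ → ℂ, Continuous f → (∀ x, f (x + 2 * Real.pi) = f x) →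
      ∀ A B : ℝ, (∀ x, ‖f x‖ ≤ A) →
      (∀ x y : ℝ, ‖f (x - y) - f x‖ ≤ B * |y| ^ s) →
      (∑' ξ : ℤ, ‖fourierCoef f ξ‖ ^ p) ^ (1/p) ≤ C * (A + B) := by
  classical
  have hp : 0 < p := by linarith
  have hkey : 1 - p/2 < s*p := by
    have h := mul_lt_mul_of_pos_right hs0 hp
    rw [sub_mul, one_div, inv_mul_cancel₀ hp.ne'] at h
    nlinarith
  set r : ℝ := (2:ℝ) ^ (1 - p/2 - s*p) with hrdef
  have hr0 : 0 < r := Real.rpow_pos_of_pos (by norm_num) _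
  have hr1 : r < 1 := by
    apply Real.rpow_lt_one_of_one_lt_of_neg one_lt_two
    linarith
  set C1 : ℝ := (4*Real.pi/3) ^ (s*p) * 4 with hC1
  have hC1pos : 0 < C1 := by
    rw [hC1]
    have : (0:ℝ) < (4*Real.pi/3) ^ (s*p) := Real.rpow_pos_of_pos (by positivity) _
    linarith
  set C2 : ℝ := C1 * (1-r)⁻¹ with hC2
  have hC2pos : 0 < C2 := by
    rw [hC2]
    have h1 : (0:ℝ) < (1-r)⁻¹ := by
      apply inv_pos.mpr
      linarith
    positivity
  refine ⟨(1 + C2) ^ (1/p), ?_⟩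
  intro f hc hper A B hA hB
  have hfper : Function.Periodic f (2*Real.pi) := hper
  have hA0 : 0 ≤ A := le_trans (norm_nonneg _) (hA 0)
  have hB0 : 0 ≤ B := by
    have h1 := hB 0 1
    have h2 : (0:ℝ) ≤ ‖f (0-1) - f 0‖ := norm_nonneg _
    have h3 : |(1:ℝ)| ^ s = 1 := by rw [abs_one, Real.one_rpow]
    rw [h3, mul_one] at h1
    linarith
  have ha : ∀ ξ : ℤ, 0 ≤ ‖fourierCoef f ξ‖ := fun ξ => norm_nonneg _
  have hexp1 : ∀ (ξ : ℤ) (x : ℝ), ‖Complex.exp (-(Complex.I * (ξ:ℂ) * (x:ℂ)))‖ = 1 := by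
    intro ξ x
    rw [Complex.norm_exp]
    have h4 : (-(Complex.I * (ξ:ℂ) * (x:ℂ))).re = 0 := by simp
    rw [h4, Real.exp_zero]
  have hcoefA : ∀ ξ : ℤ, ‖fourierCoef f ξ‖ ≤ A := by
    intro ξ
    rw [fourierCoef, norm_mul]
    have hint : ‖∫ x in (0:ℝ)..(2*Real.pi), f x * Complex.exp (-(Complex.I * (ξ:ℂ) * (x:ℂ)))‖
        ≤ A * |2*Real.pi - 0| := by
      apply intervalIntegral.norm_integral_le_of_norm_le_const
      intro x _
      rw [norm_mul, hexp1 ξ x, mul_one]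
      exact hA x
    have hco : (1/(2*(Real.pi:ℂ)) : ℂ) = ((1/(2*Real.pi) : ℝ) : ℂ) := by push_cast; ring
    calc ‖(1/(2*(Real.pi:ℂ)) : ℂ)‖ * ‖∫ x in (0:ℝ)..(2*Real.pi), f x * Complex.exp (-(Complex.I * (ξ:ℂ) * (x:ℂ)))‖
        ≤ (1/(2*Real.pi)) * (A * |2*Real.pi - 0|) := by
          rw [hco, Complex.norm_real, Real.norm_eq_abs]
          rw [abs_of_pos (by positivity : (0:ℝ) < 1/(2*Real.pi))]
          exact mul_le_mul_of_nonneg_left hint (by positivity)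
      _ = A := by
          rw [sub_zero, abs_of_pos (by positivity : (0:ℝ) < 2*Real.pi)]
          field_simp
  have key : ∀ F : Finset ℤ, ∑ ξ ∈ F, ‖fourierCoef f ξ‖ ^ p ≤ A^p + C2 * B^p := by
    intro F
    set F' := F.erase 0 with hF'
    have hstep1 : ∑ ξ ∈ F, ‖fourierCoef f ξ‖ ^ p
        ≤ A^p + ∑ ξ ∈ F', ‖fourierCoef f ξ‖ ^ p := by
      by_cases h0 : (0:ℤ) ∈ F
      · rw [← Finset.add_sum_erase F _ h0]
        have h1 : ‖fourierCoef f 0‖ ^ p ≤ A^p :=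
          Real.rpow_le_rpow (ha 0) (hcoefA 0) hp.le
        exact add_le_add_left h1 _
      · rw [hF', Finset.erase_eq_of_notMem h0]
        have h5 : (0:ℝ) ≤ A^p := Real.rpow_nonneg hA0 _
        linarith
    set σ : ℤ → ℕ := fun ξ => Nat.size ξ.natAbs with hσ
    set N := F'.sup σ with hN
    have hmaps : ∀ ξ ∈ F', σ ξ ∈ Finset.Icc 1 N := by
      intro ξ hξ
      rw [Finset.mem_Icc]
      refine ⟨?_, Finset.le_sup hξ⟩
      have hξ0 : ξ ≠ 0 := Finset.ne_of_mem_erase hξ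
      exact Nat.size_pos.mpr (Int.natAbs_pos.mpr hξ0)
    have hfib := Finset.sum_fiberwise_of_maps_to hmaps (fun ξ => ‖fourierCoef f ξ‖ ^ p)
    have hfiber : ∀ n ∈ Finset.Icc 1 N,
        ∑ ξ ∈ F'.filter (fun ξ => σ ξ = n), ‖fourierCoef f ξ‖ ^ p
          ≤ C1 * B^p * r^n := by
      intro n hn
      rw [Finset.mem_Icc] at hn
      obtain ⟨hn1, _⟩ := hn
      set G := F'.filter (fun ξ => σ ξ = n) with hG
      have hmem : ∀ ξ ∈ G, 2^(n-1) ≤ ξ.natAbs ∧ ξ.natAbs ≤ 2^n := by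
        intro ξ hξ
        rw [hG, Finset.mem_filter] at hξ
        obtain ⟨hξF, hξn⟩ := hξ
        have hξn' : Nat.size ξ.natAbs = n := hξn
        constructor
        · apply Nat.lt_size.mp
          rw [hξn']
          omega
        · have h6 := Nat.lt_size_self ξ.natAbs
          rw [hξn'] at h6
          omega
      have hG2 : ∑ ξ ∈ G, ‖fourierCoef f ξ‖ ^ 2
          ≤ (B * |4*Real.pi/3/(2:ℝ)^n| ^ s)^2 / 3 := by
        apply block_l2 hc hfper hB
        intro ξ hξ
        obtain ⟨hm1, hm2⟩ := hmem ξ hξ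
        exact exp_lower n hn1 ξ hm1 hm2
      have hcard : (G.card : ℝ) ≤ (2:ℝ)^(n+2) := by
        have hsub : G ⊆ Finset.Icc (-(2^n) : ℤ) (2^n) := by
          intro ξ hξ
          obtain ⟨_, hm2⟩ := hmem ξ hξ
          rw [Finset.mem_Icc]
          have habs : |ξ| ≤ (2^n : ℤ) := by
            rw [Int.abs_eq_natAbs]
            exact_mod_cast hm2
          exact abs_le.mp habs
        have hcard1 := Finset.card_le_card hsub
        have hIcc : (Finset.Icc (-(2^n) : ℤ) (2^n)).card = 2*2^n + 1 := by
          rw [Int.card_Icc]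
          have h7 : ((2^n : ℤ) + 1 - (-(2^n))) = ((2*2^n + 1 : ℕ) : ℤ) := by push_cast; ring
          rw [h7, Int.toNat_natCast]
        rw [hIcc] at hcard1
        have h8 : ((G.card : ℝ)) ≤ ((2*2^n + 1 : ℕ) : ℝ) := Nat.cast_le.mpr hcard1
        refine le_trans h8 ?_
        have h9 : (1:ℝ) ≤ 2^n := one_le_pow₀ (by norm_num)
        have h10 : ((2:ℝ))^(n+2) = 4 * 2^n := by rw [pow_add]; ring
        push_cast
        rw [h10]
        linarith
      have hH := holder_finset G (fun ξ => ‖fourierCoef f ξ‖) ha hp hp1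
      have habs_h : |4*Real.pi/3/(2:ℝ)^n| = 4*Real.pi/3/2^n := abs_of_pos (by positivity)
      have hmono1 : (∑ ξ ∈ G, ‖fourierCoef f ξ‖^2) ^ (p/2)
          ≤ ((B * (4*Real.pi/3/(2:ℝ)^n) ^ s)^2) ^ (p/2) := by
        apply Real.rpow_le_rpow (Finset.sum_nonneg fun ξ _ => by positivity) ?_ (by positivity)
        refine le_trans hG2 ?_
        rw [habs_h]
        have h9 : (0:ℝ) ≤ (B * (4*Real.pi/3/(2:ℝ)^n) ^ s)^2 := sq_nonneg _
        linarith
      have hmono2 : ((G.card:ℝ)) ^ (1-p/2) ≤ ((2:ℝ)^(n+2)) ^ (1-p/2) :=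
        Real.rpow_le_rpow (Nat.cast_nonneg _) hcard (by linarith)
      have hsq : ((B * (4*Real.pi/3/(2:ℝ)^n) ^ s)^2) ^ (p/2) = (B * (4*Real.pi/3/(2:ℝ)^n) ^ s)^p := by
        rw [← Real.rpow_natCast (B * (4*Real.pi/3/(2:ℝ)^n) ^ s) 2, ← Real.rpow_mul (by positivity)]
        congr 1
        push_cast
        ring
      calc ∑ ξ ∈ G, ‖fourierCoef f ξ‖ ^ p
          ≤ (∑ ξ ∈ G, ‖fourierCoef f ξ‖^2) ^ (p/2) * ((G.card:ℝ)) ^ (1-p/2) := hH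
        _ ≤ ((B * (4*Real.pi/3/(2:ℝ)^n) ^ s)^2) ^ (p/2) * ((2:ℝ)^(n+2)) ^ (1-p/2) :=
            mul_le_mul hmono1 hmono2 (Real.rpow_nonneg (Nat.cast_nonneg _) _)
              (Real.rpow_nonneg (sq_nonneg _) _)
        _ = (B * (4*Real.pi/3/(2:ℝ)^n) ^ s)^p * ((2:ℝ)^(n+2)) ^ (1-p/2) := by rw [hsq]
        _ ≤ C1 * B^p * r^n := by
            rw [hC1, hrdef]
            exact fiber_arith hp hp1 hB0 n
    have hgeom : ∑ n ∈ Finset.Icc 1 N, r^n ≤ (1-r)⁻¹ := by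
      have hsub : Finset.Icc 1 N ⊆ Finset.range (N+1) := by
        intro x hx
        rw [Finset.mem_Icc] at hx
        rw [Finset.mem_range]
        omega
      have h1 : ∑ n ∈ Finset.Icc 1 N, r^n ≤ ∑ n ∈ Finset.range (N+1), r^n :=
        Finset.sum_le_sum_of_subset_of_nonneg hsub (fun i _ _ => pow_nonneg hr0.le i)
      have h2 : ∑ n ∈ Finset.range (N+1), r^n ≤ ∑' n : ℕ, r^n :=
        Summable.sum_le_tsum _ (fun i _ => pow_nonneg hr0.le i) (summable_geometric_of_lt_one hr0.le hr1)
      rw [tsum_geometric_of_lt_one hr0.le hr1] at h2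
      linarith
    have hmid : ∑ ξ ∈ F', ‖fourierCoef f ξ‖ ^ p ≤ C2 * B^p := by
      rw [← hfib]
      calc ∑ n ∈ Finset.Icc 1 N, ∑ ξ ∈ F'.filter (fun ξ => σ ξ = n), ‖fourierCoef f ξ‖ ^ p
          ≤ ∑ n ∈ Finset.Icc 1 N, C1 * B^p * r^n := Finset.sum_le_sum hfiber
        _ = C1 * B^p * ∑ n ∈ Finset.Icc 1 N, r^n := by rw [Finset.mul_sum]
        _ ≤ C1 * B^p * (1-r)⁻¹ :=
            mul_le_mul_of_nonneg_left hgeom (by positivity)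
        _ = C2 * B^p := by rw [hC2]; ring
    linarith
  have htsum : (∑' ξ : ℤ, ‖fourierCoef f ξ‖ ^ p) ≤ A^p + C2 * B^p := by
    apply tsum_le_of_sum_le' ?_ key
    have h1 : (0:ℝ) ≤ A^p := Real.rpow_nonneg hA0 _
    have h2 : (0:ℝ) ≤ B^p := Real.rpow_nonneg hB0 _
    nlinarith
  have hub : A^p + C2*B^p ≤ (1+C2) * (A+B)^p := by
    have h1 : A^p ≤ (A+B)^p := Real.rpow_le_rpow hA0 (by linarith) hp.le
    have h2 : B^p ≤ (A+B)^p := Real.rpow_le_rpow hB0 (by linarith) hp.le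
    have h3 : C2*B^p ≤ C2*(A+B)^p := mul_le_mul_of_nonneg_left h2 hC2pos.le
    nlinarith
  have hT0 : 0 ≤ (∑' ξ : ℤ, ‖fourierCoef f ξ‖ ^ p) :=
    tsum_nonneg (fun ξ => Real.rpow_nonneg (ha ξ) p)
  have hab0 : (0:ℝ) ≤ A + B := by linarith
  calc (∑' ξ : ℤ, ‖fourierCoef f ξ‖ ^ p) ^ (1/p)
      ≤ ((1+C2) * (A+B)^p) ^ (1/p) :=
        Real.rpow_le_rpow hT0 (le_trans htsum hub) (by positivity)
    _ = (1+C2)^(1/p) * (A+B) := by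
        rw [Real.mul_rpow (by linarith) (Real.rpow_nonneg hab0 _),
          ← Real.rpow_mul hab0, mul_one_div, div_self hp.ne', Real.rpow_one]
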